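/- Let p > 3 be a prime, F a field of characteristic p, and m ≥ 1. Let B_m = F[X_1, …, X_m]/(X_1^p, …, X_m^p) and let ξ_1, …, ξ_k ∈ B_m be homogeneous elements of degree 1, that is, elements of the F-linear span of the images x_1, …, x_m of the variables. Then ξ_1, …, ξ_k are linearly dependent over F if and only if the product ξ_1^{p−1} ξ_2^{p−1} ⋯ ξ_k^{p−1} equals 0 in B_m. -/

import Mathlib

open MvPolynomial

set_option synthInstance.maxHeartbeats 1000000
set_option maxHeartbeats 1000000

/-- The truncated polynomial algebra `B_m = F[X_1, …, X_m]/(X_1^p, …, X_m^p)`. -/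
noncomputable abbrev TruncPoly (F : Type) [Field F] (p m : ℕ) : Type :=
  MvPolynomial (Fin m) F ⧸
    Ideal.span (Set.range fun i : Fin m => (X i : MvPolynomial (Fin m) F) ^ p)

/-- The image `x_i` in `B_m` of the variable `X_i`. -/
noncomputable def xVar (F : Type) [Field F] (p m : ℕ) (i : Fin m) : TruncPoly F p m :=
  Ideal.Quotient.mk _ (X i)

section Aux

variable {F : Type} [Field F] {p : ℕ}

/-- Membership in the truncation ideal: every monomial is divisible by some `X i ^ p`. -/
lemma mem_truncIdeal_iff {n : ℕ} (f : MvPolynomial (Fin n) F) :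
    f ∈ Ideal.span (Set.range fun i : Fin n => (X i : MvPolynomial (Fin n) F) ^ p) ↔
      ∀ d ∈ f.support, ∃ i, p ≤ d i := by
  have h1 : (fun i : Fin n => (X i : MvPolynomial (Fin n) F) ^ p)
      = (fun s => monomial s (1 : F)) ∘ fun i : Fin n => Finsupp.single i p := by
    funext i; simp [X_pow_eq_monomial]
  rw [show (Set.range fun i : Fin n => (X i : MvPolynomial (Fin n) F) ^ p)
      = (fun s => monomial s (1 : F)) '' (Set.range fun i : Fin n => Finsupp.single i p) by
    rw [h1, Set.range_comp]]
  rw [mem_ideal_span_monomial_image]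
  simp [Finsupp.single_le_iff]

lemma mkAlg_X (n : ℕ) (i : Fin n) :
    Ideal.Quotient.mkₐ F (Ideal.span
        (Set.range fun i : Fin n => (X i : MvPolynomial (Fin n) F) ^ p)) (X i)
      = xVar F p n i := rfl

/-- `x_1, …, x_n` are linearly independent in `B_n` (for `p ≥ 2`). -/
lemma xVar_linearIndependent (hp : 2 ≤ p) (n : ℕ) :
    LinearIndependent F (xVar F p n) := by
  rw [Fintype.linearIndependent_iff]
  intro g hg i
  have h0 : (∑ t, g t • (X t : MvPolynomial (Fin n) F)) ∈
      Ideal.span (Set.range fun i : Fin n => (X i : MvPolynomial (Fin n) F) ^ p) := by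
    rw [← Ideal.Quotient.eq_zero_iff_mem]
    have : Ideal.Quotient.mk _ (∑ t, g t • (X t : MvPolynomial (Fin n) F))
        = ∑ t, g t • xVar F p n t := by
      rw [← Ideal.Quotient.mkₐ_eq_mk F, map_sum]
      simp [mkAlg_X]
    rw [this, hg]
  rw [mem_truncIdeal_iff] at h0
  by_contra hgi
  have hsupp : (Finsupp.single i 1 : Fin n →₀ ℕ) ∈
      (∑ t, g t • (X t : MvPolynomial (Fin n) F)).support := by
    rw [mem_support_iff]
    have : coeff (Finsupp.single i 1) (∑ t, g t • (X t : MvPolynomial (Fin n) F)) = g i := by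
      rw [coeff_sum]
      rw [Finset.sum_eq_single i]
      · simp [coeff_smul]
      · intro b _ hb
        simp [coeff_smul, coeff_X', Finsupp.single_eq_single_iff, hb]
      · simp
    rw [this]; exact hgi
  obtain ⟨j, hj⟩ := h0 _ hsupp
  have : (Finsupp.single i 1 : Fin n →₀ ℕ) j ≤ 1 := by
    rcases eq_or_ne i j with rfl | h
    · simp
    · simp [Finsupp.single_apply_eq_zero.2 fun hh => absurd hh.symm h]
  omega

variable [CharP F p]

/-- The algebra map `B_m → B_n` induced by a matrix `a`, sending `x_i` to `∑ t, a i t • x_t`. -/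
noncomputable def truncHom (hp : p.Prime) {m n : ℕ} (a : Fin m → Fin n → F) :
    TruncPoly F p m →ₐ[F] TruncPoly F p n := by
  haveI : Fact p.Prime := ⟨hp⟩
  exact Ideal.Quotient.liftₐ _
    ((Ideal.Quotient.mkₐ F _).comp
      (aeval fun i : Fin m => ∑ t, a i t • (X t : MvPolynomial (Fin n) F)))
    (by
      intro f hf
      have hle : Ideal.span (Set.range fun i : Fin m => (X i : MvPolynomial (Fin m) F) ^ p) ≤
          Ideal.comap (aeval fun i : Fin m => ∑ t, a i t • (X t : MvPolynomial (Fin n) F) :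
              MvPolynomial (Fin m) F →ₐ[F] MvPolynomial (Fin n) F).toRingHom
            (Ideal.span (Set.range fun i : Fin n => (X i : MvPolynomial (Fin n) F) ^ p)) := by
        rw [Ideal.span_le]
        rintro _ ⟨i, rfl⟩
        simp only [SetLike.mem_coe, Ideal.mem_comap, AlgHom.toRingHom_eq_coe, RingHom.coe_coe,
          map_pow, aeval_X]
        rw [sum_pow_char]
        refine Ideal.sum_mem _ fun t _ => ?_
        rw [smul_pow, smul_eq_C_mul]
        exact Ideal.mul_mem_left _ _ (Ideal.subset_span ⟨t, rfl⟩)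
      have := hle hf
      rw [Ideal.mem_comap] at this
      simp only [AlgHom.comp_apply, Ideal.Quotient.mkₐ_eq_mk, Ideal.Quotient.eq_zero_iff_mem]
      exact this)

lemma truncHom_mk (hp : p.Prime) {m n : ℕ} (a : Fin m → Fin n → F) (f : MvPolynomial (Fin m) F) :
    truncHom hp a (Ideal.Quotient.mk _ f)
      = Ideal.Quotient.mk _
          (aeval (fun i : Fin m => ∑ t, a i t • (X t : MvPolynomial (Fin n) F)) f) := by
  haveI : Fact p.Prime := ⟨hp⟩
  rfl

lemma truncHom_xVar (hp : p.Prime) {m n : ℕ} (a : Fin m → Fin n → F) (i : Fin m) :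
    truncHom hp a (xVar F p m i) = ∑ t, a i t • xVar F p n t := by
  rw [xVar, truncHom_mk, aeval_X, ← Ideal.Quotient.mkₐ_eq_mk F, map_sum]
  simp only [map_smul]
  rfl

/-- A product of `k` many `(p-1)`-th powers of linear forms in `n < k` variables vanishes. -/
lemma prod_lin_pow_eq_zero (hp : 2 ≤ p) {n k : ℕ} (hk : n < k) (b : Fin k → Fin n → F) :
    (∏ j, (∑ t, b j t • xVar F p n t) ^ (p - 1)) = 0 := by
  have key : (∏ j, (∑ t, b j t • (X t : MvPolynomial (Fin n) F)) ^ (p - 1)) ∈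
      Ideal.span (Set.range fun i : Fin n => (X i : MvPolynomial (Fin n) F) ^ p) := by
    rw [mem_truncIdeal_iff]
    intro d hd
    have hhom : IsHomogeneous (∏ j, (∑ t, b j t • (X t : MvPolynomial (Fin n) F)) ^ (p - 1))
        (k * (p - 1)) := by
      have h2 : k * (p - 1) = ∑ _j : Fin k, (p - 1) := by simp [mul_comm]
      rw [h2]
      refine IsHomogeneous.prod _ _ _ fun j _ => ?_
      have h1 : IsHomogeneous (∑ t, b j t • (X t : MvPolynomial (Fin n) F)) 1 :=
        IsHomogeneous.sum _ _ _ fun t _ => by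
          rw [smul_eq_C_mul]; exact isHomogeneous_C_mul_X _ _
      simpa using h1.pow (p - 1)
    have hdeg : d.degree = k * (p - 1) := by
      by_contra hne
      exact mem_support_iff.mp hd (hhom.coeff_eq_zero hne)
    by_contra hcon
    push_neg at hcon
    have hle : d.degree ≤ n * (p - 1) := by
      calc d.degree = ∑ i ∈ d.support, d i := rfl
        _ ≤ ∑ i : Fin n, d i := Finset.sum_le_sum_of_subset (Finset.subset_univ _)
        _ ≤ ∑ _i : Fin n, (p - 1) := Finset.sum_le_sum fun i _ => by
            have := hcon i; omega
        _ = n * (p - 1) := by simp [mul_comm]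
    rw [hdeg] at hle
    have : k ≤ n := Nat.le_of_mul_le_mul_right hle (by omega)
    omega
  have heq : (∏ j, (∑ t, b j t • xVar F p n t) ^ (p - 1)) = Ideal.Quotient.mk _
      (∏ j, (∑ t, b j t • (X t : MvPolynomial (Fin n) F)) ^ (p - 1)) := by
    rw [← Ideal.Quotient.mkₐ_eq_mk F, map_prod]
    refine Finset.prod_congr rfl fun j _ => ?_
    rw [map_pow, map_sum]
    simp only [map_smul]
    rfl
  rw [heq, Ideal.Quotient.eq_zero_iff_mem]
  exact key

lemma prod_monomial_one {ι : Type*} (s : Finset ι) {n : ℕ} (f : ι → (Fin n →₀ ℕ)) :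
    (∏ i ∈ s, monomial (f i) (1 : F)) = monomial (∑ i ∈ s, f i) 1 := by
  induction s using Finset.cons_induction with
  | empty => simp [monomial_zero', C_1]
  | cons a s ha ih => rw [Finset.prod_cons, Finset.sum_cons, ih, monomial_mul, one_mul]

/-- `x_1^{p-1} ⋯ x_k^{p-1} ≠ 0` in `B_k`. -/
lemma prod_xVar_pow_ne_zero (hp : 2 ≤ p) (k : ℕ) :
    (∏ j : Fin k, xVar F p k j ^ (p - 1)) ≠ 0 := by
  have heq : (∏ j : Fin k, xVar F p k j ^ (p - 1)) = Ideal.Quotient.mk _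
      (∏ j : Fin k, (X j : MvPolynomial (Fin k) F) ^ (p - 1)) := by
    rw [map_prod]
    refine Finset.prod_congr rfl fun j _ => ?_
    rw [map_pow]
    rfl
  rw [heq, Ne, Ideal.Quotient.eq_zero_iff_mem, mem_truncIdeal_iff]
  push_neg
  refine ⟨∑ j : Fin k, Finsupp.single j (p - 1), ?_, ?_⟩
  · have h3 : (∏ j : Fin k, (X j : MvPolynomial (Fin k) F) ^ (p - 1))
        = monomial (∑ j : Fin k, Finsupp.single j (p - 1)) (1 : F) := by
      rw [← prod_monomial_one]
      exact Finset.prod_congr rfl fun j _ => X_pow_eq_monomial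
    rw [h3, mem_support_iff, coeff_monomial, if_pos rfl]
    exact one_ne_zero
  · intro i
    have h4 : (∑ j : Fin k, Finsupp.single j (p - 1) : Fin k →₀ ℕ) i = p - 1 := by
      rw [Finsupp.finset_sum_apply]
      rw [Finset.sum_eq_single i (fun b _ hb => Finsupp.single_eq_of_ne' hb) (by simp)]
      simp
    rw [h4]
    omega

end Aux

/-- Degree-one homogeneous elements `ξ_1, …, ξ_k` of `B_m` are linearly
dependent over `F` iff `ξ_1^(p-1) ⋯ ξ_k^(p-1) = 0` in `B_m`. -/
theorem linearDependent_iff_prod_pow_eq_zero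
    (p : ℕ) (hp : p.Prime) (hp3 : 3 < p) (F : Type) [Field F] [CharP F p]
    (m : ℕ) (hm : 1 ≤ m) (k : ℕ) (ξ : Fin k → TruncPoly F p m)
    (hξ : ∀ j, ξ j ∈ Submodule.span F (Set.range (xVar F p m))) :
    ¬ LinearIndependent F ξ ↔ (∏ j : Fin k, ξ j ^ (p - 1)) = 0 := by
  classical
  have hp2 : 2 ≤ p := hp.two_le
  have hcex : ∀ j, ∃ c : Fin m → F, ∑ i, c i • xVar F p m i = ξ j := fun j =>
    (Submodule.mem_span_range_iff_exists_fun F).mp (hξ j)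
  choose c hc using hcex
  set T : (Fin m → F) →ₗ[F] TruncPoly F p m :=
    Fintype.linearCombination F (xVar F p m) with hT
  have hTapp : ∀ v : Fin m → F, T v = ∑ i, v i • xVar F p m i := fun v => rfl
  have hTc : ∀ j, T (c j) = ξ j := fun j => by rw [hTapp]; exact hc j
  have hkerT : LinearMap.ker T = ⊥ := by
    rw [LinearMap.ker_eq_bot']
    intro v hv
    rw [hTapp] at hv
    have := Fintype.linearIndependent_iff.mp (xVar_linearIndependent hp2 m) v hv
    funext i; exact this i
  constructor
  · -- dependent → product vanishes
    intro hdep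
    have hdepc : ¬ LinearIndependent F c := by
      intro hindc
      refine hdep ?_
      have h5 := hindc.map' T hkerT
      rwa [show T ∘ c = ξ from funext hTc] at h5
    obtain ⟨g, hg0, j0, hj0⟩ := Fintype.not_linearIndependent_iff.mp hdepc
    obtain ⟨n, rfl⟩ : ∃ n, k = n + 1 := ⟨k - 1, by have := j0.pos; omega⟩
    set w : Fin n → Fin m → F := fun t => c (j0.succAbove t) with hw
    have hmem : ∀ j, c j ∈ Submodule.span F (Set.range w) := by
      intro j
      rcases eq_or_ne j j0 with heq | hne
      · rw [heq]
        have hsum : ∑ t, g (j0.succAbove t) • c (j0.succAbove t) = -(g j0 • c j0) := by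
          have h6 := Fin.sum_univ_succAbove (fun j => g j • c j) j0
          rw [hg0] at h6
          exact eq_neg_of_add_eq_zero_right h6.symm
        have h7 : c j0 = (-(g j0)⁻¹) • ∑ t, g (j0.succAbove t) • c (j0.succAbove t) := by
          rw [hsum, neg_smul, smul_neg, neg_neg, smul_smul, inv_mul_cancel₀ hj0, one_smul]
        rw [h7]
        exact Submodule.smul_mem _ _ (Submodule.sum_mem _ fun t _ =>
          Submodule.smul_mem _ _ (Submodule.subset_span ⟨t, rfl⟩))
      · obtain ⟨t, rfl⟩ := Fin.exists_succAbove_eq hne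
        exact Submodule.subset_span ⟨t, rfl⟩
    have hbex : ∀ j, ∃ b : Fin n → F, ∑ t, b t • w t = c j := fun j =>
      (Submodule.mem_span_range_iff_exists_fun F).mp (hmem j)
    choose b hb using hbex
    have hΨ : ∀ j, truncHom hp w (∑ t, b j t • xVar F p n t) = ξ j := by
      intro j
      rw [map_sum]
      simp only [map_smul, truncHom_xVar]
      rw [← hc j]
      calc ∑ t, b j t • ∑ i, w t i • xVar F p m i
          = ∑ t, ∑ i, (b j t * w t i) • xVar F p m i := by
            simp [Finset.smul_sum, smul_smul]
        _ = ∑ i, ∑ t, (b j t * w t i) • xVar F p m i := Finset.sum_comm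
        _ = ∑ i, c j i • xVar F p m i := by
            refine Finset.sum_congr rfl fun i _ => ?_
            rw [← Finset.sum_smul]
            congr 1
            have h8 := congrFun (hb j) i
            simpa [Finset.sum_apply, smul_eq_mul] using h8
    calc ∏ j, ξ j ^ (p - 1)
        = truncHom hp w (∏ j, (∑ t, b j t • xVar F p n t) ^ (p - 1)) := by
          rw [map_prod]
          exact (Finset.prod_congr rfl fun j _ => by rw [map_pow, hΨ]).symm
      _ = 0 := by rw [prod_lin_pow_eq_zero hp2 (Nat.lt_succ_self n) b, map_zero]
  · -- product vanishes → dependent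
    intro hprod hind
    have hindc : LinearIndependent F c :=
      LinearIndependent.of_comp T (by rwa [show T ∘ c = ξ from funext hTc])
    set G : (Fin k → F) →ₗ[F] (Fin m → F) := Fintype.linearCombination F c with hG
    have hGapp : ∀ v : Fin k → F, G v = ∑ j, v j • c j := fun v => rfl
    have hkerG : LinearMap.ker G = ⊥ := by
      rw [LinearMap.ker_eq_bot']
      intro v hv
      rw [hGapp] at hv
      have := Fintype.linearIndependent_iff.mp hindc v hv
      funext j; exact this j
    obtain ⟨θ, hθ⟩ := G.exists_leftInverse_of_injective hkerG
    have hθc : ∀ j, θ (c j) = Pi.single j 1 := by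
      intro j
      have h9 : G (Pi.single j 1) = c j := by
        rw [hGapp]
        rw [Finset.sum_eq_single j (fun b _ hb => by simp [Pi.single_eq_of_ne hb]) (by simp)]
        simp
      rw [← h9, ← LinearMap.comp_apply, hθ, LinearMap.id_apply]
    set a : Fin m → Fin k → F := fun i => θ (Pi.single i 1) with ha
    have hΦξ : ∀ j, truncHom hp a (ξ j) = xVar F p k j := by
      intro j
      rw [← hc j, map_sum]
      simp only [map_smul, truncHom_xVar]
      have hstep : ∀ t, (∑ i, c j i * a i t) = (Pi.single j 1 : Fin k → F) t := by
        intro t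
        have h10 : c j = ∑ i, c j i • (Pi.single i 1 : Fin m → F) := by
          rw [show (fun i => c j i • (Pi.single i (1 : F) : Fin m → F))
              = fun i => Pi.single i (c j i) by
            funext i; rw [← Pi.single_smul, smul_eq_mul, mul_one]]
          rw [Finset.univ_sum_single]
        have h11 := congrFun (congrArg θ h10) t
        rw [hθc j] at h11
        rw [map_sum] at h11
        simp only [map_smul] at h11
        rw [Finset.sum_apply] at h11
        simpa [smul_eq_mul] using h11.symm
      calc ∑ i, c j i • ∑ t, a i t • xVar F p k t
          = ∑ i, ∑ t, (c j i * a i t) • xVar F p k t := by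
            simp [Finset.smul_sum, smul_smul]
        _ = ∑ t, ∑ i, (c j i * a i t) • xVar F p k t := Finset.sum_comm
        _ = ∑ t, (Pi.single j 1 : Fin k → F) t • xVar F p k t := by
            refine Finset.sum_congr rfl fun t _ => ?_
            rw [← Finset.sum_smul, hstep]
        _ = xVar F p k j := by
            rw [Finset.sum_eq_single j (fun b _ hb => by simp [Pi.single_eq_of_ne hb]) (by simp)]
            simp
    have hfinal : (∏ j : Fin k, xVar F p k j ^ (p - 1)) = 0 := by
      have h12 : (∏ j : Fin k, xVar F p k j ^ (p - 1))
          = truncHom hp a (∏ j, ξ j ^ (p - 1)) := by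
        rw [map_prod]
        exact Finset.prod_congr rfl fun j _ => by rw [map_pow, hΦξ]
      rw [h12, hprod, map_zero]
    exact prod_xVar_pow_ne_zero hp2 k hfinal
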